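/- Let δ = δ_0 + uδ_1 + ⋯ + u^{t−1}δ_{t−1} ∈ R^t be a unit such that x^n − δ_{0,0} is an irreducible polynomial over F and δ_1 ≠ 0. Then for each 0 ≤ i ≤ tp^s, the ideal ⟨(x^n − δ_{0,0})^i⟩ of R^{t,n}_δ has exactly p^{nm(tp^s − i)} elements. -/

import Mathlib

open Polynomial

/-- The finite chain ring `R^t = 𝔽_{p^m}[u]/⟨u^t⟩`. -/
abbrev Rt (p m t : ℕ) [Fact p.Prime] : Type _ :=
  Polynomial (GaloisField p m) ⧸ Ideal.span {(X : Polynomial (GaloisField p m)) ^ t}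

/-- Shortcut instance (port): the nested instance search no longer finds it by itself. -/
noncomputable instance instCommRingRt (p m t : ℕ) [Fact p.Prime] : CommRing (Rt p m t) :=
  inferInstance

/-- The canonical projection `𝔽_{p^m}[u] → R^t`. -/
noncomputable def mkRt (p m t : ℕ) [Fact p.Prime] :
    Polynomial (GaloisField p m) →+* Rt p m t :=
  Ideal.Quotient.mk _

/-- The element `u ∈ R^t`. -/
noncomputable def uRt (p m t : ℕ) [Fact p.Prime] : Rt p m t := mkRt p m t X

/-- The canonical embedding `𝔽_{p^m} → R^t`. -/
noncomputable def κ (p m t : ℕ) [Fact p.Prime] : GaloisField p m →+* Rt p m t :=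
  (mkRt p m t).comp (C : GaloisField p m →+* Polynomial (GaloisField p m))

/-- The quotient ring `R^t[x]/⟨x^N − δ⟩`. -/
abbrev Qr (p m t : ℕ) [Fact p.Prime] (N : ℕ) (δ : Rt p m t) : Type _ :=
  Polynomial (Rt p m t) ⧸ Ideal.span {(X : Polynomial (Rt p m t)) ^ N - C δ}

/-- The canonical projection `R^t[x] → R^t[x]/⟨x^N − δ⟩`. -/
noncomputable def mkQr (p m t : ℕ) [Fact p.Prime] (N : ℕ) (δ : Rt p m t) :
    Polynomial (Rt p m t) →+* Qr p m t N δ :=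
  Ideal.Quotient.mk _

/-- Shortcut instance (port). -/
noncomputable instance instCommRingQr (p m t : ℕ) [Fact p.Prime] (N : ℕ) (δ : Rt p m t) :
    CommRing (Qr p m t N δ) :=
  Ideal.Quotient.commRing _

section AuxCount

lemma aux_finite_adjoinRoot {R : Type*} [CommRing R] [Finite R] {g : Polynomial R}
    (hg : g.Monic) : Finite (AdjoinRoot g) :=
  Finite.of_equiv _ (AdjoinRoot.powerBasis' hg).basis.equivFun.toEquiv.symm

lemma aux_card_adjoinRoot {R : Type*} [CommRing R] [Finite R] {g : Polynomial R}
    (hg : g.Monic) : Nat.card (AdjoinRoot g) = Nat.card R ^ g.natDegree := by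
  rw [Nat.card_congr (AdjoinRoot.powerBasis' hg).basis.equivFun.toEquiv, Nat.card_fun]
  simp [AdjoinRoot.powerBasis'_dim, Nat.card_eq_fintype_card]

lemma aux_card_span_mul_card_ker {A : Type*} [CommRing A] (a : A) :
    Nat.card (Ideal.span {a}) *
      Nat.card (LinearMap.ker (LinearMap.toSpanSingleton A A a)) = Nat.card A := by
  have h2 : Nat.card (A ⧸ LinearMap.ker (LinearMap.toSpanSingleton A A a))
      = Nat.card (Ideal.span {a}) := by
    rw [Nat.card_congr (LinearMap.quotKerEquivRange (LinearMap.toSpanSingleton A A a)).toEquiv]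
    have h : (Ideal.span {a} : Submodule A A)
        = LinearMap.range (LinearMap.toSpanSingleton A A a) := by
      rw [← LinearMap.span_singleton_eq_range]
    exact (congrArg (fun S : Submodule A A => Nat.card S) h).symm
  rw [Submodule.card_eq_card_quotient_mul_card
    (LinearMap.ker (LinearMap.toSpanSingleton A A a)), ← h2]
  ring

lemma aux_step {A : Type*} [CommRing A] [Finite A] (z : A) (j : ℕ) :
    Nat.card (Ideal.span {z ^ j}) ≤
      Nat.card (A ⧸ (Ideal.span {z} : Ideal A)) * Nat.card (Ideal.span {z ^ (j + 1)}) := by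
  haveI hfq : ∀ U : Submodule A A, Finite (A ⧸ U) := fun U =>
    Finite.of_surjective _ (Submodule.Quotient.mk_surjective U)
  set S : Submodule A A := (Ideal.span {z ^ j} : Ideal A) with hS
  set T : Submodule A A := (Ideal.span {z ^ (j + 1)} : Ideal A) with hT
  have hTS : T ≤ S := by
    rw [hS, hT]
    exact (Ideal.span_singleton_le_span_singleton).mpr ⟨z, (pow_succ z j)⟩
  have key := Submodule.card_quotient_mul_card_quotient S T hTS
  have hker : (Ideal.span {z} : Submodule A A) ≤
      LinearMap.ker (LinearMap.toSpanSingleton A (A ⧸ T) (T.mkQ (z ^ j))) := by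
    have h : (Ideal.span {z} : Submodule A A) = Submodule.span A {z} := rfl
    rw [h, Submodule.span_le, Set.singleton_subset_iff]
    rw [SetLike.mem_coe, LinearMap.mem_ker, LinearMap.toSpanSingleton_apply,
      ← map_smul, smul_eq_mul, ← pow_succ']
    rw [Submodule.mkQ_apply, Submodule.Quotient.mk_eq_zero]
    exact Ideal.mem_span_singleton_self _
  have hmap : Nat.card (S.map T.mkQ) ≤ Nat.card (A ⧸ (Ideal.span {z} : Ideal A)) := by
    set g := Submodule.liftQ (Ideal.span {z} : Ideal A)
      (LinearMap.toSpanSingleton A (A ⧸ T) (T.mkQ (z ^ j))) hker with hg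
    have hrange : LinearMap.range g = S.map T.mkQ := by
      rw [hg, Submodule.range_liftQ, ← LinearMap.span_singleton_eq_range, hS]
      have h : (Ideal.span {z ^ j} : Submodule A A) = Submodule.span A {z ^ j} := rfl
      rw [h, Submodule.map_span, Set.image_singleton]
    calc Nat.card (S.map T.mkQ) = Nat.card (LinearMap.range g) := by rw [hrange]
      _ ≤ Nat.card (A ⧸ (Ideal.span {z} : Ideal A)) :=
        Nat.card_le_card_of_surjective _ g.surjective_rangeRestrict
  have h1 := Submodule.card_eq_card_quotient_mul_card S
  have h2 := Submodule.card_eq_card_quotient_mul_card T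
  have hpos : 0 < Nat.card (A ⧸ S) := Nat.card_pos
  have heq : Nat.card S * Nat.card (A ⧸ S)
      = (Nat.card (S.map T.mkQ) * Nat.card T) * Nat.card (A ⧸ S) := by
    rw [← h1, h2, ← key]; ring
  have hSeq : Nat.card S = Nat.card (S.map T.mkQ) * Nat.card T :=
    Nat.eq_of_mul_eq_mul_right hpos heq
  calc Nat.card S = Nat.card (S.map T.mkQ) * Nat.card T := hSeq
    _ ≤ Nat.card (A ⧸ (Ideal.span {z} : Ideal A)) * Nat.card T :=
      Nat.mul_le_mul_right _ hmap

end AuxCount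

set_option maxHeartbeats 2000000 in
set_option synthInstance.maxHeartbeats 1000000 in
/-- Let `δ ∈ R^t` be a unit such that `xⁿ − δ_{0,0}` is irreducible over
`𝔽_{p^m}` and `δ₁ ≠ 0`.  Then for each `0 ≤ i ≤ tp^s`, the ideal `⟨(xⁿ − δ_{0,0})^i⟩` of
`R^{t,n}_δ` has exactly `p^{nm(tp^s − i)}` elements. -/
theorem stmt_8 (p m s t n : ℕ) [Fact p.Prime] (hm : m ≠ 0) (ht : 2 ≤ t)
    (hn : 0 < n) (hnp : ¬ p ∣ n)
    (δc : ℕ → GaloisField p m) (hδ0 : δc 0 ≠ 0) (hδ1 : δc 1 ≠ 0)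
    (δ00 : GaloisField p m) (hδ00 : δ00 ^ p ^ s = δc 0)
    (hirr : Irreducible ((X : Polynomial (GaloisField p m)) ^ n - C δ00)) :
    ∀ i ≤ t * p ^ s,
      Nat.card (Ideal.span {(mkQr p m t (n * p ^ s)
          (mkRt p m t (∑ i ∈ Finset.range t, C (δc i) * X ^ i))
          (X ^ n - C (κ p m t δ00))) ^ i}) =
        p ^ (n * m * (t * p ^ s - i)) := by
  intro i hi
  have hp : p.Prime := Fact.out
  obtain ⟨t₂, rfl⟩ : ∃ t₂, t = t₂ + 2 := ⟨t - 2, by omega⟩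
  -- basic cardinalities
  have hcardF : Nat.card (GaloisField p m) = p ^ m := GaloisField.card p m hm
  haveI : Finite (Rt p m (t₂ + 2)) := aux_finite_adjoinRoot (monic_X_pow (t₂ + 2))
  have hcardR : Nat.card (Rt p m (t₂ + 2)) = p ^ (m * (t₂ + 2)) := by
    have h := aux_card_adjoinRoot (R := GaloisField p m) (g := X ^ (t₂ + 2))
      (monic_X_pow (t₂ + 2))
    rwa [natDegree_X_pow, hcardF, ← pow_mul] at h
  haveI : Nontrivial (Rt p m (t₂ + 2)) := by
    rw [← Finite.one_lt_card_iff_nontrivial, hcardR]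
    exact Nat.one_lt_pow (Nat.mul_ne_zero hm (by omega)) hp.one_lt
  haveI : CharP (Rt p m (t₂ + 2)) p := charP_of_injective_ringHom (κ p m (t₂ + 2)).injective p
  have hN : n * p ^ s ≠ 0 := Nat.mul_ne_zero hn.ne' (pow_ne_zero s hp.pos.ne')
  set δR := mkRt p m (t₂ + 2) (∑ i ∈ Finset.range (t₂ + 2), C (δc i) * X ^ i) with hδRdef
  haveI : Finite (Qr p m (t₂ + 2) (n * p ^ s) δR) :=
    aux_finite_adjoinRoot (monic_X_pow_sub_C δR hN)
  have hcardA : Nat.card (Qr p m (t₂ + 2) (n * p ^ s) δR)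
      = p ^ ((n * m) * ((t₂ + 2) * p ^ s)) := by
    have h := aux_card_adjoinRoot (R := Rt p m (t₂ + 2)) (monic_X_pow_sub_C δR hN)
    rw [natDegree_X_pow_sub_C, hcardR, ← pow_mul] at h
    have h2 : Nat.card (Qr p m (t₂ + 2) (n * p ^ s) δR)
        = p ^ (m * (t₂ + 2) * (n * p ^ s)) := h
    rw [h2]
    congr 1
    ring
  set z := mkQr p m (t₂ + 2) (n * p ^ s) δR (X ^ n - C (κ p m (t₂ + 2) δ00)) with hzdef
  -- u is nilpotent
  have hXt0 : mkRt p m (t₂ + 2) (X ^ (t₂ + 2)) = 0 :=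
    Ideal.Quotient.eq_zero_iff_mem.mpr (Ideal.mem_span_singleton_self _)
  have hu_t : uRt p m (t₂ + 2) ^ (t₂ + 2) = 0 := by
    show mkRt p m (t₂ + 2) X ^ (t₂ + 2) = 0
    rw [← map_pow, hXt0]
  -- the factorization δR - κ (δc 0) = u * v
  have hpoly : (∑ i ∈ Finset.range (t₂ + 2), C (δc i) * X ^ i) - C (δc 0)
      = X * ∑ i ∈ Finset.range (t₂ + 1), C (δc (i + 1)) * X ^ i := by
    rw [Finset.sum_range_succ']
    simp only [pow_zero, mul_one]
    rw [add_sub_cancel_right, Finset.mul_sum]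
    exact Finset.sum_congr rfl fun i _ => by ring
  have hfact : δR - κ p m (t₂ + 2) (δc 0)
      = uRt p m (t₂ + 2) *
        mkRt p m (t₂ + 2) (∑ i ∈ Finset.range (t₂ + 1), C (δc (i + 1)) * X ^ i) := by
    show δR - mkRt p m (t₂ + 2) (C (δc 0))
      = mkRt p m (t₂ + 2) X *
        mkRt p m (t₂ + 2) (∑ i ∈ Finset.range (t₂ + 1), C (δc (i + 1)) * X ^ i)
    rw [hδRdef, ← map_mul, ← map_sub, hpoly]
  -- v is a unit
  have hpoly2 : (∑ i ∈ Finset.range (t₂ + 1), C (δc (i + 1)) * X ^ i)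
      = C (δc 1) + X * ∑ i ∈ Finset.range t₂, C (δc (i + 2)) * X ^ i := by
    rw [Finset.sum_range_succ']
    simp only [pow_zero, mul_one]
    rw [Finset.mul_sum, add_comm]
    congr 1
    exact Finset.sum_congr rfl fun i _ => by ring
  have hvunit : IsUnit
      (mkRt p m (t₂ + 2) (∑ i ∈ Finset.range (t₂ + 1), C (δc (i + 1)) * X ^ i)) := by
    rw [hpoly2, map_add]
    refine IsNilpotent.isUnit_add_left_of_commute ?_ ?_ (Commute.all _ _)
    · refine ⟨t₂ + 2, ?_⟩
      rw [← map_pow, mul_pow, map_mul, hXt0, zero_mul]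
    · show IsUnit (κ p m (t₂ + 2) (δc 1))
      exact (hδ1.isUnit).map (κ p m (t₂ + 2))
  -- key Frobenius identity
  have hkey : ((X : Polynomial (Rt p m (t₂ + 2))) ^ n - C (κ p m (t₂ + 2) δ00)) ^ p ^ s
      = X ^ (n * p ^ s) - C (κ p m (t₂ + 2) (δc 0)) := by
    rw [sub_pow_char_pow, ← pow_mul, ← map_pow, ← map_pow, hδ00]
  have hgen0 : mkQr p m (t₂ + 2) (n * p ^ s) δR (X ^ (n * p ^ s) - C δR) = 0 :=
    Ideal.Quotient.eq_zero_iff_mem.mpr (Ideal.mem_span_singleton_self _)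
  have hz_ps : z ^ p ^ s
      = mkQr p m (t₂ + 2) (n * p ^ s) δR (C (δR - κ p m (t₂ + 2) (δc 0))) := by
    show mkQr p m (t₂ + 2) (n * p ^ s) δR (X ^ n - C (κ p m (t₂ + 2) δ00)) ^ p ^ s = _
    rw [← map_pow, hkey]
    have h : (X ^ (n * p ^ s) - C (κ p m (t₂ + 2) (δc 0)) : Polynomial (Rt p m (t₂ + 2)))
        = (X ^ (n * p ^ s) - C δR) + C (δR - κ p m (t₂ + 2) (δc 0)) := by
      rw [map_sub]; ring
    rw [h, map_add, hgen0, zero_add]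
  -- z ^ T = 0
  have hzT : z ^ ((t₂ + 2) * p ^ s) = 0 := by
    rw [mul_comm (t₂ + 2) (p ^ s), pow_mul, hz_ps, ← map_pow, ← map_pow, hfact, mul_pow,
      hu_t, zero_mul, map_zero, map_zero]
  -- z divides the image of u
  have hCu : z ∣ mkQr p m (t₂ + 2) (n * p ^ s) δR (C (uRt p m (t₂ + 2))) := by
    obtain ⟨vu, hvu⟩ := hvunit
    have hu_eq : uRt p m (t₂ + 2)
        = (δR - κ p m (t₂ + 2) (δc 0)) * ((vu⁻¹ : Units (Rt p m (t₂ + 2))) : Rt p m (t₂ + 2)) := by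
      rw [hfact, ← hvu, mul_assoc, Units.mul_inv, mul_one]
    have h : mkQr p m (t₂ + 2) (n * p ^ s) δR (C (uRt p m (t₂ + 2)))
        = z ^ p ^ s * mkQr p m (t₂ + 2) (n * p ^ s) δR
            (C ((vu⁻¹ : Units (Rt p m (t₂ + 2))) : Rt p m (t₂ + 2))) := by
      rw [hu_eq, map_mul, map_mul, hz_ps]
    rw [h]
    exact (dvd_pow_self z (pow_ne_zero s hp.pos.ne')).mul_right _
  -- the quotient B := A / (z) has at most p^(n*m) elements
  set ψ : Polynomial (GaloisField p m) →+* (Qr p m (t₂ + 2) (n * p ^ s) δR ⧸ Ideal.span {z}) :=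
    (Ideal.Quotient.mk (Ideal.span {z})).comp
      ((mkQr p m (t₂ + 2) (n * p ^ s) δR).comp (mapRingHom (κ p m (t₂ + 2)))) with hψdef
  have hψC : ∀ r : Rt p m (t₂ + 2), ∃ a, ψ (C a)
      = Ideal.Quotient.mk (Ideal.span {z}) (mkQr p m (t₂ + 2) (n * p ^ s) δR (C r)) := by
    intro r
    obtain ⟨q, rfl⟩ : ∃ q, mkRt p m (t₂ + 2) q = r := Ideal.Quotient.mk_surjective r
    refine ⟨q.coeff 0, ?_⟩
    have hr : mkRt p m (t₂ + 2) q
        = uRt p m (t₂ + 2) * mkRt p m (t₂ + 2) q.divX + κ p m (t₂ + 2) (q.coeff 0) := by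
      show mkRt p m (t₂ + 2) q = mkRt p m (t₂ + 2) X * mkRt p m (t₂ + 2) q.divX
        + mkRt p m (t₂ + 2) (C (q.coeff 0))
      rw [← map_mul, ← map_add, X_mul_divX_add]
    rw [hr]
    simp only [map_add, map_mul]
    have h0 : Ideal.Quotient.mk (Ideal.span {z})
        (mkQr p m (t₂ + 2) (n * p ^ s) δR (C (uRt p m (t₂ + 2)))) = 0 :=
      Ideal.Quotient.eq_zero_iff_mem.mpr (Ideal.mem_span_singleton.mpr hCu)
    rw [h0, zero_mul, zero_add, hψdef]
    simp only [RingHom.comp_apply, coe_mapRingHom, Polynomial.map_C]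
  have hψ_surj : Function.Surjective ψ := by
    intro b
    obtain ⟨a, rfl⟩ := Ideal.Quotient.mk_surjective b
    obtain ⟨P, rfl⟩ : ∃ P, mkQr p m (t₂ + 2) (n * p ^ s) δR P = a :=
      Ideal.Quotient.mk_surjective a
    induction P using Polynomial.induction_on' with
    | add f g hf hg =>
      obtain ⟨pf, hpf⟩ := hf
      obtain ⟨pg, hpg⟩ := hg
      exact ⟨pf + pg, by rw [map_add, hpf, hpg, ← map_add, ← map_add]⟩
    | monomial k a =>
      obtain ⟨c, hc⟩ := hψC a
      refine ⟨C c * X ^ k, ?_⟩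
      have hX : ψ X = Ideal.Quotient.mk (Ideal.span {z})
          (mkQr p m (t₂ + 2) (n * p ^ s) δR X) := by
        rw [hψdef]
        simp only [RingHom.comp_apply, coe_mapRingHom, Polynomial.map_X]
      rw [map_mul, map_pow, hc, hX, ← C_mul_X_pow_eq_monomial, ← map_pow, ← map_pow,
        ← map_mul, ← map_mul]
  have hψ_gen : ψ (X ^ n - C δ00) = 0 := by
    have hmap : (mapRingHom (κ p m (t₂ + 2))) (X ^ n - C δ00)
        = X ^ n - C (κ p m (t₂ + 2) δ00) := by
      simp
    rw [hψdef]
    show Ideal.Quotient.mk (Ideal.span {z})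
      (mkQr p m (t₂ + 2) (n * p ^ s) δR ((mapRingHom (κ p m (t₂ + 2))) (X ^ n - C δ00))) = 0
    rw [hmap, ← hzdef]
    exact Ideal.Quotient.eq_zero_iff_mem.mpr (Ideal.mem_span_singleton_self _)
  have hker : ∀ a ∈ Ideal.span {(X : Polynomial (GaloisField p m)) ^ n - C δ00},
      ψ a = 0 := by
    intro a ha
    rw [Ideal.mem_span_singleton] at ha
    obtain ⟨c, rfl⟩ := ha
    rw [map_mul, hψ_gen, zero_mul]
  have hcardB : Nat.card (Qr p m (t₂ + 2) (n * p ^ s) δR ⧸ Ideal.span {z}) ≤ p ^ (n * m) := by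
    haveI : Finite (AdjoinRoot ((X : Polynomial (GaloisField p m)) ^ n - C δ00)) :=
      aux_finite_adjoinRoot (monic_X_pow_sub_C δ00 hn.ne')
    have hcardK : Nat.card (AdjoinRoot ((X : Polynomial (GaloisField p m)) ^ n - C δ00))
        = p ^ (n * m) := by
      rw [aux_card_adjoinRoot (monic_X_pow_sub_C δ00 hn.ne'), natDegree_X_pow_sub_C,
        hcardF, ← pow_mul, mul_comm]
    rw [← hcardK]
    refine Nat.card_le_card_of_surjective
      (Ideal.Quotient.lift _ ψ hker) (fun b => ?_)
    obtain ⟨a, ha⟩ := hψ_surj b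
    exact ⟨Ideal.Quotient.mk _ a, by rw [Ideal.Quotient.lift_mk]; exact ha⟩
  -- the counting argument
  have hstep : ∀ j, Nat.card (Ideal.span {z ^ j}) ≤
      p ^ (n * m) * Nat.card (Ideal.span {z ^ (j + 1)}) :=
    fun j => le_trans (aux_step z j) (Nat.mul_le_mul_right _ hcardB)
  have hlow : ∀ j, Nat.card (Qr p m (t₂ + 2) (n * p ^ s) δR) ≤
      p ^ (n * m * j) * Nat.card (Ideal.span {z ^ j}) := by
    intro j
    induction j with
    | zero =>
      rw [mul_zero, pow_zero, one_mul, pow_zero, Ideal.span_singleton_one]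
      exact le_of_eq (Nat.card_congr Submodule.topEquiv.toEquiv).symm
    | succ j ih =>
      calc Nat.card (Qr p m (t₂ + 2) (n * p ^ s) δR)
          ≤ p ^ (n * m * j) * Nat.card (Ideal.span {z ^ j}) := ih
        _ ≤ p ^ (n * m * j) * (p ^ (n * m) * Nat.card (Ideal.span {z ^ (j + 1)})) :=
            Nat.mul_le_mul_left _ (hstep j)
        _ = p ^ (n * m * (j + 1)) * Nat.card (Ideal.span {z ^ (j + 1)}) := by ring
  have hup : Nat.card (Ideal.span {z ^ i}) *
        Nat.card (Ideal.span {z ^ ((t₂ + 2) * p ^ s - i)})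
      ≤ Nat.card (Qr p m (t₂ + 2) (n * p ^ s) δR) := by
    rw [← aux_card_span_mul_card_ker (z ^ i)]
    refine Nat.mul_le_mul_left _ ?_
    have hmem : (Ideal.span {z ^ ((t₂ + 2) * p ^ s - i)} : Submodule _ _) ≤
        LinearMap.ker (LinearMap.toSpanSingleton _ _ (z ^ i)) := by
      have h : (Ideal.span {z ^ ((t₂ + 2) * p ^ s - i)} : Submodule _ _)
          = Submodule.span _ {z ^ ((t₂ + 2) * p ^ s - i)} := rfl
      rw [h, Submodule.span_le, Set.singleton_subset_iff, SetLike.mem_coe,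
        LinearMap.mem_ker, LinearMap.toSpanSingleton_apply, smul_eq_mul,
        ← pow_add]
      rw [Nat.sub_add_cancel hi]
      exact hzT
    exact Nat.card_le_card_of_injective (Submodule.inclusion hmem)
      (Submodule.inclusion_injective hmem)
  -- final arithmetic
  have hTi : ((t₂ + 2) * p ^ s - i) + i = (t₂ + 2) * p ^ s := Nat.sub_add_cancel hi
  have h1 : p ^ ((n * m) * ((t₂ + 2) * p ^ s - i)) ≤ Nat.card (Ideal.span {z ^ i}) := by
    have h := hlow i
    rw [hcardA] at h
    have h2 : p ^ ((n * m) * i) * p ^ ((n * m) * ((t₂ + 2) * p ^ s - i))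
        ≤ p ^ ((n * m) * i) * Nat.card (Ideal.span {z ^ i}) := by
      rw [← pow_add]
      calc p ^ ((n * m) * i + (n * m) * ((t₂ + 2) * p ^ s - i))
          = p ^ ((n * m) * ((t₂ + 2) * p ^ s)) := by
            congr 1
            calc (n * m) * i + (n * m) * ((t₂ + 2) * p ^ s - i)
                = (n * m) * (i + ((t₂ + 2) * p ^ s - i)) := by ring
              _ = (n * m) * ((t₂ + 2) * p ^ s) := by
                  rw [Nat.add_sub_cancel' hi]
        _ ≤ p ^ ((n * m) * i) * Nat.card (Ideal.span {z ^ i}) := h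
    exact Nat.le_of_mul_le_mul_left h2 (pow_pos hp.pos _)
  have h2 : p ^ ((n * m) * i) ≤ Nat.card (Ideal.span {z ^ ((t₂ + 2) * p ^ s - i)}) := by
    have h := hlow ((t₂ + 2) * p ^ s - i)
    rw [hcardA] at h
    have h2 : p ^ ((n * m) * ((t₂ + 2) * p ^ s - i)) * p ^ ((n * m) * i)
        ≤ p ^ ((n * m) * ((t₂ + 2) * p ^ s - i)) *
          Nat.card (Ideal.span {z ^ ((t₂ + 2) * p ^ s - i)}) := by
      rw [← pow_add]
      calc p ^ ((n * m) * ((t₂ + 2) * p ^ s - i) + (n * m) * i)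
          = p ^ ((n * m) * ((t₂ + 2) * p ^ s)) := by
            congr 1
            calc (n * m) * ((t₂ + 2) * p ^ s - i) + (n * m) * i
                = (n * m) * (((t₂ + 2) * p ^ s - i) + i) := by ring
              _ = (n * m) * ((t₂ + 2) * p ^ s) := by rw [hTi]
        _ ≤ _ := h
    exact Nat.le_of_mul_le_mul_left h2 (pow_pos hp.pos _)
  have h3 : Nat.card (Ideal.span {z ^ i}) ≤ p ^ ((n * m) * ((t₂ + 2) * p ^ s - i)) := by
    have hA : Nat.card (Qr p m (t₂ + 2) (n * p ^ s) δR)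
        = p ^ ((n * m) * ((t₂ + 2) * p ^ s - i)) * p ^ ((n * m) * i) := by
      rw [hcardA, ← pow_add]
      congr 1
      calc (n * m) * ((t₂ + 2) * p ^ s)
          = (n * m) * (((t₂ + 2) * p ^ s - i) + i) := by rw [hTi]
        _ = (n * m) * ((t₂ + 2) * p ^ s - i) + (n * m) * i := by ring
    have hchain : Nat.card (Ideal.span {z ^ i}) * p ^ ((n * m) * i)
        ≤ p ^ ((n * m) * ((t₂ + 2) * p ^ s - i)) * p ^ ((n * m) * i) := by
      rw [← hA]
      exact le_trans (Nat.mul_le_mul_left _ h2) hup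
    exact Nat.le_of_mul_le_mul_right hchain (pow_pos hp.pos _)
  have hfin : Nat.card (Ideal.span {z ^ i}) = p ^ ((n * m) * ((t₂ + 2) * p ^ s - i)) :=
    le_antisymm h3 h1
  exact hfin
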